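/- Let k be an algebraically closed field, A a finite-dimensional k-algebra (e.g. a path algebra of a finite acyclic quiver), and B a finite-dimensional right A-module with End_A(B) ≅ k (a brick). Then the natural ring homomorphism f_B: A → End_k(B) giving the module structure of B is a ring epimorphism. -/

import Mathlib

universe u

open MulOpposite

/-- `f : A → B` is an epimorphism in the category of rings. -/
def IsRingEpi {A B : Type u} [Ring A] [Ring B] (f : A →+* B) : Prop :=
  ∀ ⦃T : Type u⦄ [Ring T], ∀ g₁ g₂ : B →+* T, g₁.comp f = g₂.comp f → g₁ = g₂

section Aux

variable {k B : Type u} [Field k] [AddCommGroup B] [Module k B]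

/-- Composing an endomorphism with a rank-one operator. -/
private lemma end_mul_smulRight (s : Module.End k B) (f : B →ₗ[k] k) (b : B) :
    s * LinearMap.smulRight f b = LinearMap.smulRight f (s b) := by
  ext x
  simp [Module.End.mul_apply, LinearMap.smulRight_apply, map_smul]

private lemma smulRight_add_right (f : B →ₗ[k] k) (b c : B) :
    LinearMap.smulRight f (b + c) = LinearMap.smulRight f b + LinearMap.smulRight f c := by
  ext x
  simp [smul_add]

private lemma smulRight_zero_right (f : B →ₗ[k] k) :
    LinearMap.smulRight f (0 : B) = 0 := by
  ext x
  simp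

/-- The identity is the sum of the rank-one operators attached to a finite basis. -/
private lemma one_eq_sum_smulRight {ι : Type u} [Fintype ι] (bs : Module.Basis ι k B) :
    (1 : Module.End k B) = ∑ i, LinearMap.smulRight (bs.coord i) (bs i) := by
  ext x
  simp only [Module.End.one_apply, LinearMap.coe_sum, Finset.sum_apply,
    LinearMap.smulRight_apply, Module.Basis.coord_apply]
  exact (bs.sum_repr x).symm

/-- `B` is a simple module over its own endomorphism ring. -/
private lemma isSimpleModule_self [Nontrivial B] :
    IsSimpleModule (Module.End k B) B := by
  haveI : Nontrivial (Submodule (Module.End k B) B) := by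
    refine nontrivial_of_ne ⊥ ⊤ fun h => ?_
    obtain ⟨b, hb⟩ := exists_ne (0 : B)
    have hb' : b ∈ (⊥ : Submodule (Module.End k B) B) := by rw [h]; trivial
    exact hb (by simpa using hb')
  refine (isSimpleModule_iff ..).mpr ⟨fun P => ?_⟩
  rcases eq_or_ne P ⊥ with h | h
  · exact Or.inl h
  · right
    obtain ⟨b, hbP, hb0⟩ := (Submodule.ne_bot_iff P).mp h
    obtain ⟨f, hfb⟩ : ∃ f : Module.Dual k B, f b ≠ 0 := by
      by_contra h'
      push_neg at h'
      exact hb0 ((Module.forall_dual_apply_eq_zero_iff k b).mp h')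
    rw [eq_top_iff]
    intro v _
    have hv := P.smul_mem (LinearMap.smulRight ((f b)⁻¹ • f) v) hbP
    rw [Module.End.smul_def, LinearMap.smulRight_apply, LinearMap.smul_apply,
      smul_eq_mul, inv_mul_cancel₀ hfb, one_smul] at hv
    exact hv

/-- Every simple module over `End_k(B)` is isomorphic to `B`. -/
private lemma exists_equiv [FiniteDimensional k B] [Nontrivial B]
    (Q : Type u) [AddCommGroup Q] [Module (Module.End k B) Q]
    [IsSimpleModule (Module.End k B) Q] :
    Nonempty (B ≃ₗ[Module.End k B] Q) := by
  classical
  haveI := isSimpleModule_self (k := k) (B := B)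
  haveI : Nontrivial Q := IsSimpleModule.nontrivial (Module.End k B) Q
  obtain ⟨q, hq⟩ := exists_ne (0 : Q)
  have hex : ∃ (f : B →ₗ[k] k) (b : B), (LinearMap.smulRight f b) • q ≠ 0 := by
    by_contra h'
    push_neg at h'
    apply hq
    let bs := Module.Free.chooseBasis k B
    calc q = (1 : Module.End k B) • q := (one_smul _ q).symm
      _ = ∑ i, (LinearMap.smulRight (bs.coord i) (bs i)) • q := by
          rw [one_eq_sum_smulRight bs, Finset.sum_smul]
      _ = 0 := Finset.sum_eq_zero fun i _ => h' _ _
  obtain ⟨f, b, hfb⟩ := hex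
  let θ : B →ₗ[Module.End k B] Q :=
    { toFun := fun x => (LinearMap.smulRight f x) • q
      map_add' := fun x y => by
        show (LinearMap.smulRight f (x + y)) • q = _
        rw [smulRight_add_right, add_smul]
      map_smul' := fun s x => by
        show (LinearMap.smulRight f (s • x)) • q = s • (LinearMap.smulRight f x) • q
        rw [Module.End.smul_def, ← end_mul_smulRight, mul_smul] }
  have hθb : θ b ≠ 0 := hfb
  have hinj : Function.Injective θ := by
    rcases eq_bot_or_eq_top (LinearMap.ker θ) with h | h
    · exact LinearMap.ker_eq_bot.mp h
    · exact absurd (by rw [← LinearMap.mem_ker, h]; exact Submodule.mem_top) hθb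
  have hsurj : Function.Surjective θ := by
    rcases eq_bot_or_eq_top (LinearMap.range θ) with h | h
    · refine absurd ?_ hθb
      have : θ b ∈ LinearMap.range θ := LinearMap.mem_range_self θ b
      rwa [h, Submodule.mem_bot] at this
    · exact LinearMap.range_eq_top.mp h
  exact ⟨LinearEquiv.ofBijective θ ⟨hinj, hsurj⟩⟩

/-- The endomorphism ring of a finite-dimensional vector space is semisimple. -/
private lemma isSemisimpleRing_end [FiniteDimensional k B] :
    IsSemisimpleRing (Module.End k B) := by
  classical
  rcases subsingleton_or_nontrivial B with h | h
  · haveI : Subsingleton (Module.End k B) :=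
      ⟨fun a b => LinearMap.ext fun x => Subsingleton.elim _ _⟩
    haveI : Subsingleton (Submodule (Module.End k B) (Module.End k B)) := by
      constructor
      intro P R
      ext x
      have : x = 0 := Subsingleton.elim _ _
      simp [this]
    infer_instance
  · haveI := isSimpleModule_self (k := k) (B := B)
    haveI : IsSemisimpleModule (Module.End k B) B := inferInstance
    let ι := Module.Free.ChooseBasisIndex k B
    let bs : Module.Basis ι k B := Module.Free.chooseBasis k B
    let Φ : Module.End k B →ₗ[Module.End k B] (ι → B) :=
      { toFun := fun s i => s (bs i)
        map_add' := fun s t => rfl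
        map_smul' := fun t s => rfl }
    have hbij : Function.Bijective Φ := by
      constructor
      · intro s t hst
        exact bs.ext fun i => congrFun hst i
      · intro v
        exact ⟨bs.constr k v, funext fun i => bs.constr_basis k v i⟩
    haveI : IsSemisimpleModule (Module.End k B) (ι → B) := by
      refine isSemisimpleModule_of_isSemisimpleModule_submodule'
        (p := fun i => LinearMap.range (LinearMap.single (Module.End k B) (fun _ => B) i))
        (fun i => ?_) (LinearMap.iSup_range_single _ _)
      have hinj : Function.Injective (LinearMap.single (Module.End k B) (fun _ : ι => B) i) := by
        rw [LinearMap.coe_single]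
        exact Pi.single_injective i
      exact IsSemisimpleModule.congr (LinearEquiv.ofInjective _ hinj).symm
    exact (Φ.isSemisimpleModule_iff_of_bijective hbij).mpr this

/-- Separation of points on any `End_k(B)`-module by `B`-valued linear functionals. -/
private lemma exists_sep [FiniteDimensional k B] [Nontrivial B]
    {N : Type u} [AddCommGroup N] [Module (Module.End k B) N] {y : N} (hy : y ≠ 0) :
    ∃ χ : N →ₗ[Module.End k B] B, χ y ≠ 0 := by
  haveI : IsSemisimpleRing (Module.End k B) := isSemisimpleRing_end
  obtain ⟨W, -, hWmax⟩ := zorn_le_nonempty₀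
      {W : Submodule (Module.End k B) N | y ∉ W}
      (fun c hcs hchain w hw => by
        refine ⟨sSup c, ?_, fun z hz => le_sSup hz⟩
        intro hyc
        rw [Submodule.mem_sSup_of_directed ⟨w, hw⟩ hchain.directedOn] at hyc
        obtain ⟨z, hzc, hyz⟩ := hyc
        exact hcs hzc hyz)
      ⊥ (by simpa using hy)
  have hyW : y ∉ W := hWmax.1
  have hyQ : W.mkQ y ≠ 0 := by
    simpa [Submodule.Quotient.mk_eq_zero] using hyW
  have key : ∀ P : Submodule (Module.End k B) (N ⧸ W), P ≠ ⊥ → W.mkQ y ∈ P := by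
    intro P hP
    by_contra hyP
    have hWle : W ≤ P.comap W.mkQ := by
      intro w hw
      have : W.mkQ w = 0 := by simpa [Submodule.Quotient.mk_eq_zero] using hw
      simp [Submodule.mem_comap, this]
    have hle : P.comap W.mkQ ≤ W := hWmax.2 hyP hWle
    have hPeq : P.comap W.mkQ = W := le_antisymm hle hWle
    apply hP
    have hmap := Submodule.map_comap_eq_of_surjective W.mkQ_surjective P
    rw [← hmap, hPeq]
    rw [eq_bot_iff]
    rintro x ⟨w, hw, rfl⟩
    simpa [Submodule.Quotient.mk_eq_zero] using hw
  haveI : IsSimpleModule (Module.End k B) (N ⧸ W) := by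
    haveI : Nontrivial (Submodule (Module.End k B) (N ⧸ W)) := by
      refine nontrivial_of_ne ⊥ ⊤ fun hbt => ?_
      have hmem : W.mkQ y ∈ (⊥ : Submodule (Module.End k B) (N ⧸ W)) := by rw [hbt]; trivial
      exact hyQ (by simpa using hmem)
    refine (isSimpleModule_iff ..).mpr ⟨fun P => ?_⟩
    rcases eq_or_ne P ⊥ with h | h
    · exact Or.inl h
    · right
      obtain ⟨V, hV⟩ := exists_isCompl P
      rcases eq_or_ne V ⊥ with hV0 | hV0
      · rw [hV0] at hV
        have := hV.sup_eq_top
        rwa [sup_bot_eq] at this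
      · exfalso
        have h1 := key P h
        have h2 := key V hV0
        have hmem : W.mkQ y ∈ P ⊓ V := ⟨h1, h2⟩
        rw [hV.inf_eq_bot] at hmem
        exact hyQ (by simpa using hmem)
  obtain ⟨e⟩ := exists_equiv (k := k) (B := B) (N ⧸ W)
  refine ⟨e.symm.toLinearMap ∘ₗ W.mkQ, ?_⟩
  intro h0
  apply hyQ
  have : e.symm (W.mkQ y) = 0 := h0
  simpa using congrArg e this

/-- Main lemma: an additive map from the brick `B` into a ring under `End_k(B)` which
intertwines the `A`-actions automatically intertwines the full `End_k(B)`-actions. -/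
private lemma aux_key {T R : Type u} [Ring T] [Ring R] [FiniteDimensional k B]
    (ρ : R →+* Module.End k B)
    (hbrick : ∀ φ : B →+ B, (∀ r x, φ (ρ r x) = ρ r (φ x)) → ∃ c : k, ∀ x : B, φ x = c • x)
    (g : Module.End k B →+* T) (ψ : B →+ T)
    (hψ : ∀ r x, ψ (ρ r x) = g (ρ r) * ψ x) (s : Module.End k B) (x : B) :
    ψ (s x) = g s * ψ x := by
  rcases subsingleton_or_nontrivial B with h | h
  · have hx : x = (0 : B) := Subsingleton.elim _ _
    have hsx : s x = (0 : B) := Subsingleton.elim _ _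
    rw [hsx, hx, map_zero, mul_zero]
  · letI : Module (Module.End k B) T := Module.compHom T g
    by_contra hne
    have hy : ψ (s x) - g s * ψ x ≠ 0 := sub_ne_zero.mpr hne
    obtain ⟨χ, hχ⟩ := exists_sep (k := k) (B := B) (N := T) hy
    have hsmul : ∀ (e : Module.End k B) (t : T), e • t = g e * t := fun _ _ => rfl
    have hcomm : ∀ r z, (χ.toAddMonoidHom.comp ψ) (ρ r z) = ρ r ((χ.toAddMonoidHom.comp ψ) z) := by
      intro r z
      show χ (ψ (ρ r z)) = ρ r (χ (ψ z))
      rw [hψ, ← hsmul, map_smul]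
      rfl
    obtain ⟨c, hc⟩ := hbrick _ hcomm
    apply hχ
    have h1 : χ (ψ (s x)) = c • (s x) := hc (s x)
    have h2 : χ (g s * ψ x) = s (c • x) := by
      rw [← hsmul, map_smul, Module.End.smul_def]
      exact congrArg s (hc x)
    rw [map_sub, h1, h2, map_smul, sub_self]

end Aux

/-- **Proposition 19, (i) ⇒ (ii), epimorphism part.** Let `k` be an algebraically
closed field, `A` a finite-dimensional `k`-algebra, and `B` a finite-dimensional right
`A`-module which is a brick, i.e. every `A`-linear endomorphism of `B` is a scalar. Then the
natural homomorphism `f_B : A → End_k(B)` recording the right action of `A` on `B` (an honest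
ring homomorphism out of `Aᵐᵒᵖ`) is a ring epimorphism. -/
theorem stmt11 {k A B : Type u} [Field k] [IsAlgClosed k]
    [Ring A] [Algebra k A] [FiniteDimensional k A]
    [AddCommGroup B] [Module k B] [FiniteDimensional k B]
    [Module Aᵐᵒᵖ B] [SMulCommClass Aᵐᵒᵖ k B]
    (hbrick : ∀ φ : B →ₗ[Aᵐᵒᵖ] B, ∃ c : k, ∀ x : B, φ x = c • x) :
    IsRingEpi (Module.toModuleEnd k B : Aᵐᵒᵖ →+* Module.End k B) := by
  classical
  intro T _ g₁ g₂ hg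
  have hgf : ∀ a : Aᵐᵒᵖ, g₁ ((Module.toModuleEnd k B) a) = g₂ ((Module.toModuleEnd k B) a) :=
    fun a => by simpa [RingHom.comp_apply] using RingHom.congr_fun hg a
  have hbrick' : ∀ φ : B →+ B,
      (∀ (r : Aᵐᵒᵖ) (x : B), φ ((Module.toModuleEnd k B) r x) = (Module.toModuleEnd k B) r (φ x)) →
      ∃ c : k, ∀ x : B, φ x = c • x := by
    intro φ hφ
    exact hbrick
      { toFun := φ
        map_add' := φ.map_add
        map_smul' := fun a x => by simpa using hφ a x }
  refine RingHom.ext fun s => ?_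
  let bs : Module.Basis (Module.Free.ChooseBasisIndex k B) k B := Module.Free.chooseBasis k B
  have key : ∀ i, g₁ (s * LinearMap.smulRight (bs.coord i) (bs i)) =
      g₂ s * g₁ (LinearMap.smulRight (bs.coord i) (bs i)) := by
    intro i
    let ψ : B →+ T :=
      { toFun := fun b => g₁ (LinearMap.smulRight (bs.coord i) b)
        map_zero' := by
          show g₁ (LinearMap.smulRight (bs.coord i) (0 : B)) = 0
          rw [smulRight_zero_right, map_zero]
        map_add' := fun b c => by
          show g₁ (LinearMap.smulRight (bs.coord i) (b + c)) = _
          rw [smulRight_add_right, map_add] }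
    have hψ : ∀ (r : Aᵐᵒᵖ) (x : B),
        ψ ((Module.toModuleEnd k B) r x) = g₂ ((Module.toModuleEnd k B) r) * ψ x := by
      intro r x
      show g₁ (LinearMap.smulRight (bs.coord i) ((Module.toModuleEnd k B) r x)) = _
      rw [← end_mul_smulRight, map_mul, hgf]
      rfl
    have hmain := aux_key (Module.toModuleEnd k B) hbrick' g₂ ψ hψ s (bs i)
    rw [end_mul_smulRight]
    exact hmain
  calc g₁ s = g₁ (s * 1) := by rw [mul_one]
    _ = ∑ i, g₁ (s * LinearMap.smulRight (bs.coord i) (bs i)) := by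
        rw [one_eq_sum_smulRight bs, Finset.mul_sum, map_sum]
    _ = ∑ i, g₂ s * g₁ (LinearMap.smulRight (bs.coord i) (bs i)) :=
        Finset.sum_congr rfl fun i _ => key i
    _ = g₂ s * g₁ (∑ i, LinearMap.smulRight (bs.coord i) (bs i)) := by
        rw [map_sum, Finset.mul_sum]
    _ = g₂ s := by rw [← one_eq_sum_smulRight bs, map_one, mul_one]
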